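/- With W, ∈_W, =_W as in the implicative model of set theory, the term j := λx.e(p x ρ) belongs to Σ and satisfies j ≤ ⋀_{α∈W} ⋀_{u∈dom(α)}(α(u) → u ∈_W α). -/
import Mathlib


universe u v

/-- An implicative algebra: a complete lattice with an implication antitone in the
first argument, monotone in the second, distributing over arbitrary meets in the
second argument, together with a separator `Sep` which is upward closed, closed
under modus ponens, and contains the combinators K and S. -/
structure ImplicativeAlgebra (A : Type u) [CompleteLattice A] where
  imp : A → A → A
  imp_anti : ∀ ⦃a a' b : A⦄, a ≤ a' → imp a' b ≤ imp a b
  imp_mono : ∀ ⦃a b b' : A⦄, b ≤ b' → imp a b ≤ imp a b'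
  imp_sInf : ∀ (a : A) (S : Set A), imp a (sInf S) = ⨅ b ∈ S, imp a b
  Sep : Set A
  sep_upward : ∀ ⦃a b : A⦄, a ∈ Sep → a ≤ b → b ∈ Sep
  sep_mp : ∀ ⦃a b : A⦄, imp a b ∈ Sep → a ∈ Sep → b ∈ Sep
  sep_K : (⨅ a : A, ⨅ b : A, imp a (imp b a)) ∈ Sep
  sep_S : (⨅ a : A, ⨅ b : A, ⨅ c : A,
      imp (imp a (imp b c)) (imp (imp a b) (imp a c))) ∈ Sep

namespace ImplicativeAlgebra

variable {A : Type u} [CompleteLattice A] (𝔸 : ImplicativeAlgebra A)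

/-- Application: `a · b := ⋀ {x | a ≤ b → x}`. -/
def app (a b : A) : A := sInf {x : A | a ≤ 𝔸.imp b x}

/-- Implicative conjunction `a × b`. -/
def itimes (a b : A) : A := ⨅ x : A, 𝔸.imp (𝔸.imp a (𝔸.imp b x)) x

/-- Implicative disjunction `a + b`. -/
def iplus (a b : A) : A := ⨅ x : A, 𝔸.imp (𝔸.imp a x) (𝔸.imp (𝔸.imp b x) x)

/-- Second-order encoding of the existential quantifier. -/
def iexists {ι : Sort v} (f : ι → A) : A := ⨅ x : A, 𝔸.imp (⨅ i, 𝔸.imp (f i) x) x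

/-- Encoding of k = λx.λy.x. -/
def kComb : A := ⨅ a : A, 𝔸.imp a (⨅ b : A, 𝔸.imp b a)

/-- Encoding of λx.λy.y. -/
def kbarComb : A := ⨅ a : A, 𝔸.imp a (⨅ b : A, 𝔸.imp b b)

/-- Encoding of the pairing combinator p = λx.λy.λz.zxy. -/
def pComb : A := ⨅ a : A, 𝔸.imp a (⨅ b : A, 𝔸.imp b (⨅ c : A, 𝔸.imp c (𝔸.app (𝔸.app c a) b)))

/-- Encoding of the first projection p₁ = λu.u k. -/
def p1Comb : A := ⨅ u : A, 𝔸.imp u (𝔸.app u 𝔸.kComb)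

/-- Encoding of the second projection p₂ = λv.v k̄. -/
def p2Comb : A := ⨅ u : A, 𝔸.imp u (𝔸.app u 𝔸.kbarComb)

/-- Encoding of the existential-introduction combinator e = λx.λz.zx. -/
def eComb : A := ⨅ a : A, 𝔸.imp a (⨅ c : A, 𝔸.imp c (𝔸.app c a))

end ImplicativeAlgebra

/-- Names of the implicative model of set theory: a name is a (set-indexed)
family of previously constructed names, each labelled by a truth value in `A`
(a partial function from names to `A`, presented as a family). -/
inductive Name (A : Type u) : Type (u + 1)
  | mk (ι : Type u) (elem : ι → Name A) (val : ι → A) : Name A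

namespace Name

/-- The (index set of the) domain of a name. -/
def idx {A : Type u} : Name A → Type u
  | .mk ι _ _ => ι

/-- The elements of the domain of a name. -/
def elem {A : Type u} : (α : Name A) → α.idx → Name A
  | .mk _ e _ => e

/-- The truth value attached to each element of the domain of a name. -/
def val {A : Type u} : (α : Name A) → α.idx → A
  | .mk _ _ v => v

variable {A : Type u} [CompleteLattice A]

/-- `eqPair 𝔸 α β = (α ⊆_W β, β ⊆_W α)`, defined by simultaneous recursion,
where `α ⊆_W β := ⋀_{t ∈ dom α}(α(t) → t ∈_W β)` and
`t ∈_W β := ∃_{u ∈ dom β}(β(u) × (u =_W t))` and `u =_W t := (u ⊆_W t) × (t ⊆_W u)`. -/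
def eqPair (𝔸 : ImplicativeAlgebra A) : Name A → Name A → A × A
  | .mk _ e v, .mk _ e' v' =>
    (⨅ i, 𝔸.imp (v i) (𝔸.iexists fun j => 𝔸.itimes (v' j)
        (𝔸.itimes (eqPair 𝔸 (e i) (e' j)).2 (eqPair 𝔸 (e i) (e' j)).1)),
     ⨅ j, 𝔸.imp (v' j) (𝔸.iexists fun i => 𝔸.itimes (v i)
        (𝔸.itimes (eqPair 𝔸 (e i) (e' j)).1 (eqPair 𝔸 (e i) (e' j)).2)))

/-- `α ⊆_W β`. -/
def subW (𝔸 : ImplicativeAlgebra A) (α β : Name A) : A := (eqPair 𝔸 α β).1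

/-- `α =_W β := (α ⊆_W β) × (β ⊆_W α)`. -/
def eqW (𝔸 : ImplicativeAlgebra A) (α β : Name A) : A :=
  𝔸.itimes (eqPair 𝔸 α β).1 (eqPair 𝔸 α β).2

/-- `α ∈_W β := ∃_{t ∈ dom β}(β(t) × (t =_W α))`. -/
def memW (𝔸 : ImplicativeAlgebra A) (α β : Name A) : A :=
  𝔸.iexists fun j : β.idx => 𝔸.itimes (β.val j) (eqW 𝔸 (β.elem j) α)

end Name

section Aux

namespace ImplicativeAlgebra

variable {A : Type u} [CompleteLattice A] (𝔸 : ImplicativeAlgebra A)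

lemma le_imp_app (a b : A) : a ≤ 𝔸.imp b (𝔸.app a b) := by
  rw [app, 𝔸.imp_sInf]
  exact le_iInf₂ fun x hx => hx

lemma app_le {a b x : A} (h : a ≤ 𝔸.imp b x) : 𝔸.app a b ≤ x := sInf_le h

lemma le_imp {a b x : A} (h : 𝔸.app a b ≤ x) : a ≤ 𝔸.imp b x :=
  (𝔸.le_imp_app a b).trans (𝔸.imp_mono h)

lemma app_mono {a a' b b' : A} (h1 : a ≤ a') (h2 : b ≤ b') :
    𝔸.app a b ≤ 𝔸.app a' b' :=
  𝔸.app_le (h1.trans ((𝔸.le_imp_app a' b').trans (𝔸.imp_anti h2)))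

lemma app_sep {a b : A} (ha : a ∈ 𝔸.Sep) (hb : b ∈ 𝔸.Sep) : 𝔸.app a b ∈ 𝔸.Sep :=
  𝔸.sep_mp (𝔸.sep_upward ha (𝔸.le_imp_app a b)) hb

/-- The K combinator as an element. -/
def KA : A := ⨅ a : A, ⨅ b : A, 𝔸.imp a (𝔸.imp b a)

/-- The S combinator as an element. -/
def SA : A := ⨅ a : A, ⨅ b : A, ⨅ c : A,
  𝔸.imp (𝔸.imp a (𝔸.imp b c)) (𝔸.imp (𝔸.imp a b) (𝔸.imp a c))

lemma KA_sep : 𝔸.KA ∈ 𝔸.Sep := 𝔸.sep_K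

lemma SA_sep : 𝔸.SA ∈ 𝔸.Sep := 𝔸.sep_S

lemma K_beta (a b : A) : 𝔸.app (𝔸.app 𝔸.KA a) b ≤ a := by
  have h1 : 𝔸.KA ≤ 𝔸.imp a (𝔸.imp b a) := (iInf_le _ a).trans (iInf_le _ b)
  exact 𝔸.app_le (𝔸.app_le h1)

lemma S_beta (a b c : A) :
    𝔸.app (𝔸.app (𝔸.app 𝔸.SA a) b) c ≤ 𝔸.app (𝔸.app a c) (𝔸.app b c) := by
  set Z := 𝔸.app (𝔸.app a c) (𝔸.app b c) with hZ
  have haX : a ≤ 𝔸.imp c (𝔸.imp (𝔸.app b c) Z) :=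
    (𝔸.le_imp_app a c).trans (𝔸.imp_mono (𝔸.le_imp_app (𝔸.app a c) (𝔸.app b c)))
  have hbY : b ≤ 𝔸.imp c (𝔸.app b c) := 𝔸.le_imp_app b c
  have hS : 𝔸.SA ≤ 𝔸.imp (𝔸.imp c (𝔸.imp (𝔸.app b c) Z))
      (𝔸.imp (𝔸.imp c (𝔸.app b c)) (𝔸.imp c Z)) :=
    ((iInf_le _ c).trans ((iInf_le _ (𝔸.app b c)).trans (iInf_le _ Z)))
  have h1 : 𝔸.app 𝔸.SA a ≤ 𝔸.imp (𝔸.imp c (𝔸.app b c)) (𝔸.imp c Z) :=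
    𝔸.app_le (hS.trans (𝔸.imp_anti haX))
  have h2 : 𝔸.app (𝔸.app 𝔸.SA a) b ≤ 𝔸.imp c Z :=
    𝔸.app_le (h1.trans (𝔸.imp_anti hbY))
  exact 𝔸.app_le h2

/-- The identity combinator I = S K K. -/
def IA : A := 𝔸.app (𝔸.app 𝔸.SA 𝔸.KA) 𝔸.KA

lemma IA_sep : 𝔸.IA ∈ 𝔸.Sep := 𝔸.app_sep (𝔸.app_sep 𝔸.SA_sep 𝔸.KA_sep) 𝔸.KA_sep

lemma I_beta (c : A) : 𝔸.app 𝔸.IA c ≤ c :=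
  (𝔸.S_beta 𝔸.KA 𝔸.KA c).trans (𝔸.K_beta c (𝔸.app 𝔸.KA c))

/-- SK-term for e = λx.λz.zx : e' = S (K (S I)) K. -/
def eA : A := 𝔸.app (𝔸.app 𝔸.SA (𝔸.app 𝔸.KA (𝔸.app 𝔸.SA 𝔸.IA))) 𝔸.KA

lemma eA_sep : 𝔸.eA ∈ 𝔸.Sep :=
  𝔸.app_sep (𝔸.app_sep 𝔸.SA_sep (𝔸.app_sep 𝔸.KA_sep (𝔸.app_sep 𝔸.SA_sep 𝔸.IA_sep)))
    𝔸.KA_sep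

lemma e_beta (a c : A) : 𝔸.app (𝔸.app 𝔸.eA a) c ≤ 𝔸.app c a := by
  have h1 : 𝔸.app 𝔸.eA a ≤ 𝔸.app (𝔸.app 𝔸.SA 𝔸.IA) (𝔸.app 𝔸.KA a) :=
    (𝔸.S_beta _ _ a).trans (𝔸.app_mono (𝔸.K_beta _ a) le_rfl)
  calc 𝔸.app (𝔸.app 𝔸.eA a) c
      ≤ 𝔸.app (𝔸.app (𝔸.app 𝔸.SA 𝔸.IA) (𝔸.app 𝔸.KA a)) c := 𝔸.app_mono h1 le_rfl
    _ ≤ 𝔸.app (𝔸.app 𝔸.IA c) (𝔸.app (𝔸.app 𝔸.KA a) c) := 𝔸.S_beta _ _ c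
    _ ≤ 𝔸.app c a := 𝔸.app_mono (𝔸.I_beta c) (𝔸.K_beta a c)

lemma eA_le : 𝔸.eA ≤ 𝔸.eComb := by
  refine le_iInf fun a => 𝔸.le_imp (le_iInf fun c => 𝔸.le_imp ?_)
  exact 𝔸.e_beta a c

/-- SK-term for p = λx.λy.λz.zxy. -/
def VA : A := 𝔸.app (𝔸.app 𝔸.SA (𝔸.app 𝔸.KA 𝔸.SA))
  (𝔸.app (𝔸.app 𝔸.SA (𝔸.app 𝔸.KA (𝔸.app 𝔸.SA 𝔸.IA))) 𝔸.KA)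

def UA : A := 𝔸.app (𝔸.app 𝔸.SA (𝔸.app 𝔸.KA 𝔸.SA))
  (𝔸.app (𝔸.app 𝔸.SA (𝔸.app 𝔸.KA 𝔸.KA)) 𝔸.VA)

def pA : A := 𝔸.app (𝔸.app 𝔸.SA 𝔸.UA) (𝔸.app 𝔸.KA 𝔸.KA)

lemma VA_sep : 𝔸.VA ∈ 𝔸.Sep := by
  unfold VA
  repeat' first
    | exact 𝔸.SA_sep | exact 𝔸.KA_sep | exact 𝔸.IA_sep
    | (apply 𝔸.app_sep)

lemma UA_sep : 𝔸.UA ∈ 𝔸.Sep := by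
  unfold UA
  repeat' first
    | exact 𝔸.SA_sep | exact 𝔸.KA_sep | exact 𝔸.VA_sep
    | (apply 𝔸.app_sep)

lemma pA_sep : 𝔸.pA ∈ 𝔸.Sep := by
  unfold pA
  repeat' first
    | exact 𝔸.SA_sep | exact 𝔸.KA_sep | exact 𝔸.UA_sep
    | (apply 𝔸.app_sep)

lemma V_beta (x : A) :
    𝔸.app 𝔸.VA x ≤ 𝔸.app 𝔸.SA (𝔸.app (𝔸.app 𝔸.SA 𝔸.IA) (𝔸.app 𝔸.KA x)) := by
  have h1 : 𝔸.app (𝔸.app (𝔸.app 𝔸.SA (𝔸.app 𝔸.KA (𝔸.app 𝔸.SA 𝔸.IA))) 𝔸.KA) x ≤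
      𝔸.app (𝔸.app 𝔸.SA 𝔸.IA) (𝔸.app 𝔸.KA x) :=
    (𝔸.S_beta _ _ x).trans (𝔸.app_mono (𝔸.K_beta _ x) le_rfl)
  exact (𝔸.S_beta _ _ x).trans (𝔸.app_mono (𝔸.K_beta _ x) h1)

lemma U_beta (x : A) : 𝔸.app 𝔸.UA x ≤ 𝔸.app 𝔸.SA (𝔸.app 𝔸.KA (𝔸.app 𝔸.VA x)) := by
  have h1 : 𝔸.app (𝔸.app (𝔸.app 𝔸.SA (𝔸.app 𝔸.KA 𝔸.KA)) 𝔸.VA) x ≤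
      𝔸.app 𝔸.KA (𝔸.app 𝔸.VA x) :=
    (𝔸.S_beta _ _ x).trans (𝔸.app_mono (𝔸.K_beta _ x) le_rfl)
  exact (𝔸.S_beta _ _ x).trans (𝔸.app_mono (𝔸.K_beta _ x) h1)

lemma p_beta (x y z : A) :
    𝔸.app (𝔸.app (𝔸.app 𝔸.pA x) y) z ≤ 𝔸.app (𝔸.app z x) y := by
  have h1 : 𝔸.app 𝔸.pA x ≤ 𝔸.app (𝔸.app 𝔸.SA (𝔸.app 𝔸.KA (𝔸.app 𝔸.VA x))) 𝔸.KA :=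
    (𝔸.S_beta _ _ x).trans (𝔸.app_mono (𝔸.U_beta x) (𝔸.K_beta _ x))
  have h2 : 𝔸.app (𝔸.app 𝔸.pA x) y ≤
      𝔸.app (𝔸.app 𝔸.SA (𝔸.app (𝔸.app 𝔸.SA 𝔸.IA) (𝔸.app 𝔸.KA x))) (𝔸.app 𝔸.KA y) := by
    calc 𝔸.app (𝔸.app 𝔸.pA x) y
        ≤ 𝔸.app (𝔸.app (𝔸.app 𝔸.SA (𝔸.app 𝔸.KA (𝔸.app 𝔸.VA x))) 𝔸.KA) y :=
          𝔸.app_mono h1 le_rfl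
      _ ≤ 𝔸.app (𝔸.app (𝔸.app 𝔸.KA (𝔸.app 𝔸.VA x)) y) (𝔸.app 𝔸.KA y) := 𝔸.S_beta _ _ y
      _ ≤ 𝔸.app (𝔸.app 𝔸.VA x) (𝔸.app 𝔸.KA y) := 𝔸.app_mono (𝔸.K_beta _ y) le_rfl
      _ ≤ _ := 𝔸.app_mono (𝔸.V_beta x) le_rfl
  calc 𝔸.app (𝔸.app (𝔸.app 𝔸.pA x) y) z
      ≤ 𝔸.app (𝔸.app (𝔸.app 𝔸.SA (𝔸.app (𝔸.app 𝔸.SA 𝔸.IA) (𝔸.app 𝔸.KA x)))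
          (𝔸.app 𝔸.KA y)) z := 𝔸.app_mono h2 le_rfl
    _ ≤ 𝔸.app (𝔸.app (𝔸.app (𝔸.app 𝔸.SA 𝔸.IA) (𝔸.app 𝔸.KA x)) z)
          (𝔸.app (𝔸.app 𝔸.KA y) z) := 𝔸.S_beta _ _ z
    _ ≤ 𝔸.app (𝔸.app (𝔸.app 𝔸.IA z) (𝔸.app (𝔸.app 𝔸.KA x) z)) y :=
          𝔸.app_mono (𝔸.S_beta _ _ z) (𝔸.K_beta y z)
    _ ≤ 𝔸.app (𝔸.app z x) y :=
          𝔸.app_mono (𝔸.app_mono (𝔸.I_beta z) (𝔸.K_beta x z)) le_rfl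

lemma pA_le : 𝔸.pA ≤ 𝔸.pComb := by
  refine le_iInf fun a => 𝔸.le_imp (le_iInf fun b => 𝔸.le_imp (le_iInf fun c =>
    𝔸.le_imp ?_))
  exact 𝔸.p_beta a b c

end ImplicativeAlgebra

end Aux

/-- the term j := λx.e(p x ρ) belongs to Σ and satisfies
j ≤ ⋀_{α∈W} ⋀_{u∈dom(α)}(α(u) → u ∈_W α). -/
theorem memW_intro_realized {A : Type u} [CompleteLattice A]
    (𝔸 : ImplicativeAlgebra A) (ρ : A) (hρSep : ρ ∈ 𝔸.Sep)
    (hρ : ρ ≤ ⨅ α : Name A, Name.eqW 𝔸 α α) :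
    (⨅ a : A, 𝔸.imp a (𝔸.app 𝔸.eComb (𝔸.app (𝔸.app 𝔸.pComb a) ρ))) ∈ 𝔸.Sep ∧
      (⨅ a : A, 𝔸.imp a (𝔸.app 𝔸.eComb (𝔸.app (𝔸.app 𝔸.pComb a) ρ))) ≤
        ⨅ α : Name A, ⨅ u : α.idx,
          𝔸.imp (α.val u) (Name.memW 𝔸 (α.elem u) α) := by
  classical
  set j := ⨅ a : A, 𝔸.imp a (𝔸.app 𝔸.eComb (𝔸.app (𝔸.app 𝔸.pComb a) ρ)) with hj
  -- the SK-term t := S (K e') (S p' (K ρ))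
  set t := 𝔸.app (𝔸.app 𝔸.SA (𝔸.app 𝔸.KA 𝔸.eA))
      (𝔸.app (𝔸.app 𝔸.SA 𝔸.pA) (𝔸.app 𝔸.KA ρ)) with ht
  have htSep : t ∈ 𝔸.Sep := by
    refine 𝔸.app_sep (𝔸.app_sep 𝔸.SA_sep (𝔸.app_sep 𝔸.KA_sep 𝔸.eA_sep))
      (𝔸.app_sep (𝔸.app_sep 𝔸.SA_sep 𝔸.pA_sep) (𝔸.app_sep 𝔸.KA_sep hρSep))
  have htj : t ≤ j := by
    refine le_iInf fun a => 𝔸.le_imp ?_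
    calc 𝔸.app t a
        ≤ 𝔸.app (𝔸.app (𝔸.app 𝔸.KA 𝔸.eA) a)
            (𝔸.app (𝔸.app (𝔸.app 𝔸.SA 𝔸.pA) (𝔸.app 𝔸.KA ρ)) a) := 𝔸.S_beta _ _ a
      _ ≤ 𝔸.app 𝔸.eA (𝔸.app (𝔸.app 𝔸.pA a) (𝔸.app (𝔸.app 𝔸.KA ρ) a)) :=
            𝔸.app_mono (𝔸.K_beta _ a) (𝔸.S_beta _ _ a)
      _ ≤ 𝔸.app 𝔸.eComb (𝔸.app (𝔸.app 𝔸.pComb a) ρ) :=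
            𝔸.app_mono 𝔸.eA_le
              (𝔸.app_mono (𝔸.app_mono 𝔸.pA_le le_rfl)
                (𝔸.K_beta ρ a))
  refine ⟨𝔸.sep_upward htSep htj, ?_⟩
  refine le_iInf fun α => le_iInf fun u => 𝔸.le_imp ?_
  set m := 𝔸.app (𝔸.app 𝔸.pComb (α.val u)) ρ with hm
  have hjapp : 𝔸.app j (α.val u) ≤ 𝔸.app 𝔸.eComb m :=
    𝔸.app_le (iInf_le _ (α.val u))
  -- beta for pComb: m ≤ ⨅ c, c → c (val u) ρ
  have hmle : m ≤ ⨅ c : A, 𝔸.imp c (𝔸.app (𝔸.app c (α.val u)) ρ) := by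
    refine le_iInf fun c => ?_
    have h1 : 𝔸.pComb ≤ 𝔸.imp (α.val u) (⨅ b : A, 𝔸.imp b (⨅ c : A,
        𝔸.imp c (𝔸.app (𝔸.app c (α.val u)) b))) := iInf_le _ _
    have h2 : 𝔸.app 𝔸.pComb (α.val u) ≤ 𝔸.imp ρ (⨅ c : A,
        𝔸.imp c (𝔸.app (𝔸.app c (α.val u)) ρ)) :=
      𝔸.app_le (h1.trans (𝔸.imp_mono (iInf_le _ ρ)))
    exact (𝔸.app_le h2).trans (iInf_le _ c)
  -- beta for eComb
  have hele : 𝔸.app 𝔸.eComb m ≤ ⨅ c : A, 𝔸.imp c (𝔸.app c m) :=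
    𝔸.app_le (iInf_le _ m)
  have hρb : ρ ≤ Name.eqW 𝔸 (α.elem u) (α.elem u) := hρ.trans (iInf_le _ _)
  -- m realizes the pair (α.val u, eqW (elem u) (elem u))
  have hmT : m ≤ 𝔸.itimes (α.val u) (Name.eqW 𝔸 (α.elem u) (α.elem u)) := by
    refine le_iInf fun y => ?_
    set b := Name.eqW 𝔸 (α.elem u) (α.elem u)
    have h1 : m ≤ 𝔸.imp (𝔸.imp (α.val u) (𝔸.imp b y))
        (𝔸.app (𝔸.app (𝔸.imp (α.val u) (𝔸.imp b y)) (α.val u)) ρ) :=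
      hmle.trans (iInf_le _ _)
    refine h1.trans (𝔸.imp_mono ?_)
    have h2 : 𝔸.app (𝔸.imp (α.val u) (𝔸.imp b y)) (α.val u) ≤ 𝔸.imp ρ y :=
      (𝔸.app_le le_rfl).trans (𝔸.imp_anti hρb)
    exact 𝔸.app_le h2
  refine hjapp.trans ?_
  show 𝔸.app 𝔸.eComb m ≤ Name.memW 𝔸 (α.elem u) α
  rw [Name.memW, ImplicativeAlgebra.iexists]
  refine le_iInf fun x => ?_
  set C := ⨅ i : α.idx, 𝔸.imp (𝔸.itimes (α.val i) (Name.eqW 𝔸 (α.elem i) (α.elem u))) x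
    with hC
  refine (hele.trans (iInf_le _ C)).trans (𝔸.imp_mono ?_)
  have hCm : C ≤ 𝔸.imp m x := by
    refine (iInf_le _ u).trans (𝔸.imp_anti ?_)
    exact hmT
  exact 𝔸.app_le hCm
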